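/- Let G=(V,E,w) be an edge-weighted graph with E≠∅ and let d be a positive real with d(V) ≥ d; set r = ⌈d/w_max⌉. Among all subsets S ⊆ V satisfying |S| ≥ r and w(S) > d(V)·(|S| − r/2), let S be one of minimum cardinality. Then the induced subgraph G[S] is (⌊r/2⌋ + 1)-vertex-connected. -/

import Mathlib

open Finset
open scoped Classical

noncomputable section

variable {V : Type*} [Fintype V] [DecidableEq V]

/-- The set of edges of `G` with both endpoints in `S`, i.e. the edge set `E(S)`
of the induced subgraph `G[S]`. -/
def edgesIn (G : SimpleGraph V) (S : Finset V) : Finset (Sym2 V) :=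
  Finset.univ.filter (fun e => e ∈ G.edgeSet ∧ ∀ v ∈ e, v ∈ S)

/-- `w(S)`: the total weight of the edges of the induced subgraph `G[S]`. -/
def wsum (G : SimpleGraph V) (w : Sym2 V → ℝ) (S : Finset V) : ℝ :=
  ∑ e ∈ edgesIn G S, w e

/-- The density `d(S) = w(S)/|S|` of the induced subgraph `G[S]`. -/
def density (G : SimpleGraph V) (w : Sym2 V → ℝ) (S : Finset V) : ℝ :=
  wsum G w S / S.card

/-- The weighted degree of a vertex `v` in the induced subgraph `G[S]`. -/
def wdeg (G : SimpleGraph V) (w : Sym2 V → ℝ) (S : Finset V) (v : V) : ℝ :=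
  ∑ e ∈ (edgesIn G S).filter (fun e => v ∈ e), w e

/-- `G[S]` is `k`-vertex-connected: it has at least `k+1` vertices, and deleting any set
of fewer than `k` vertices leaves a connected graph. -/
def VertexConnected (G : SimpleGraph V) (S : Finset V) (k : ℕ) : Prop :=
  k + 1 ≤ S.card ∧ ∀ D : Finset V, D ⊆ S → D.card < k →
    (G.induce ((S \ D : Finset V) : Set V)).Connected

/-- The edge-weighted graph `G[S]` is `k`-edge-connected: it is connected, and every set `F`
of its edges whose removal disconnects it has total weight at least `k`. -/
def EdgeConnected (G : SimpleGraph V) (w : Sym2 V → ℝ) (S : Finset V) (k : ℝ) : Prop :=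
  (G.induce (S : Set V)).Connected ∧
  ∀ F : Finset (Sym2 V), F ⊆ edgesIn G S →
    ¬ ((G.deleteEdges (F : Set (Sym2 V))).induce (S : Set V)).Connected →
    k ≤ ∑ e ∈ F, w e

lemma mem_edgesIn {G : SimpleGraph V} {S : Finset V} {e : Sym2 V} :
    e ∈ edgesIn G S ↔ e ∈ G.edgeSet ∧ ∀ v ∈ e, v ∈ S := by
  simp [edgesIn]

lemma edgesIn_subset {G : SimpleGraph V} {S T : Finset V} (h : S ⊆ T) :
    edgesIn G S ⊆ edgesIn G T := by
  intro e he
  rw [mem_edgesIn] at he ⊢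
  exact ⟨he.1, fun v hv => h (he.2 v hv)⟩

lemma sum_wdeg_eq (G : SimpleGraph V) (w : Sym2 V → ℝ) (S T : Finset V) :
    ∑ v ∈ T, wdeg G w S v
      = ∑ e ∈ edgesIn G S, ((T.filter (fun v => v ∈ e)).card : ℝ) * w e := by
  unfold wdeg
  rw [Finset.sum_comm' (t' := edgesIn G S) (s' := fun e => T.filter (fun v => v ∈ e))
    (t := fun v => (edgesIn G S).filter (fun e => v ∈ e)) (s := T)]
  · refine Finset.sum_congr rfl fun e _ => ?_
    rw [Finset.sum_const, nsmul_eq_mul]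
  · intro x y
    simp [Finset.mem_filter, and_comm, and_assoc, and_left_comm]

lemma filter_card_two {G : SimpleGraph V} {S : Finset V} {e : Sym2 V} (he : e ∈ edgesIn G S) :
    (S.filter (fun v => v ∈ e)).card = 2 := by
  rw [mem_edgesIn] at he
  induction e using Sym2.ind with
  | _ x y =>
    have hxy : x ≠ y := by
      intro h
      exact G.not_isDiag_of_mem_edgeSet he.1 (by simp [h])
    have hx : x ∈ S := he.2 x (by simp)
    have hy : y ∈ S := he.2 y (by simp)
    have : S.filter (fun v => v ∈ s(x, y)) = {x, y} := by
      ext v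
      simp only [Finset.mem_filter, Sym2.mem_iff, Finset.mem_insert, Finset.mem_singleton]
      constructor
      · rintro ⟨_, h⟩; exact h
      · rintro (rfl | rfl)
        · exact ⟨hx, Or.inl rfl⟩
        · exact ⟨hy, Or.inr rfl⟩
    rw [this, Finset.card_pair hxy]

lemma two_wsum (G : SimpleGraph V) (w : Sym2 V → ℝ) (S : Finset V) :
    2 * wsum G w S = ∑ v ∈ S, wdeg G w S v := by
  rw [sum_wdeg_eq, wsum, Finset.mul_sum]
  refine Finset.sum_congr rfl fun e he => ?_
  rw [filter_card_two he]
  norm_num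

lemma wdeg_le (G : SimpleGraph V) (w : Sym2 V → ℝ) (S : Finset V) (v : V) (U : Finset V)
    (wm : ℝ) (hwm0 : 0 ≤ wm) (hwle : ∀ e ∈ edgesIn G S, w e ≤ wm)
    (h : ∀ e ∈ edgesIn G S, v ∈ e → ∃ u ∈ U, e = s(v, u)) :
    wdeg G w S v ≤ (U.card : ℝ) * wm := by
  have hsub : (edgesIn G S).filter (fun e => v ∈ e) ⊆ U.image (fun u => s(v, u)) := by
    intro e he
    rw [Finset.mem_filter] at he
    obtain ⟨u, hu, rfl⟩ := h e he.1 he.2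
    exact Finset.mem_image.mpr ⟨u, hu, rfl⟩
  have hcard : ((edgesIn G S).filter (fun e => v ∈ e)).card ≤ U.card :=
    le_trans (Finset.card_le_card hsub) (Finset.card_image_le)
  calc wdeg G w S v ≤ (((edgesIn G S).filter (fun e => v ∈ e)).card : ℝ) * wm := by
        rw [← nsmul_eq_mul]
        exact Finset.sum_le_card_nsmul _ _ _ fun e he => hwle e (Finset.mem_filter.mp he).1
    _ ≤ (U.card : ℝ) * wm := by
        exact mul_le_mul_of_nonneg_right (by exact_mod_cast hcard) hwm0

lemma wsum_le_split (G : SimpleGraph V) (w : Sym2 V → ℝ) (S A B : Finset V)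
    (hw0 : ∀ e ∈ G.edgeSet, 0 ≤ w e)
    (hsub : ∀ e ∈ edgesIn G S, e ∈ edgesIn G A ∨ e ∈ edgesIn G B) :
    wsum G w S ≤ wsum G w A + wsum G w B := by
  have h1 : edgesIn G S ⊆ edgesIn G A ∪ edgesIn G B := by
    intro e he; rw [Finset.mem_union]; exact hsub e he
  have h2 : wsum G w S ≤ ∑ e ∈ edgesIn G A ∪ edgesIn G B, w e := by
    refine Finset.sum_le_sum_of_subset_of_nonneg h1 fun e he _ => ?_
    rw [Finset.mem_union] at he
    rcases he with he | he
    · exact hw0 e (mem_edgesIn.mp he).1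
    · exact hw0 e (mem_edgesIn.mp he).1
  have h3 : (0:ℝ) ≤ ∑ e ∈ edgesIn G A ∩ edgesIn G B, w e :=
    Finset.sum_nonneg fun e he => hw0 e (mem_edgesIn.mp (Finset.mem_inter.mp he).1).1
  have h4 := Finset.sum_union_inter (s₁ := edgesIn G A) (s₂ := edgesIn G B) (f := w)
  unfold wsum at h2 ⊢
  linarith

lemma wsum_le_side (G : SimpleGraph V) (w : Sym2 V → ℝ) (S A B : Finset V)
    (hw0 : ∀ e ∈ G.edgeSet, 0 ≤ w e)
    (hsub : ∀ e ∈ edgesIn G S, (∃ v ∈ e, v ∈ A) ∨ e ∈ edgesIn G B) :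
    wsum G w S ≤ (∑ v ∈ A, wdeg G w S v) + wsum G w B := by
  classical
  have hsplit := Finset.sum_filter_add_sum_filter_not (edgesIn G S)
    (fun e => ∃ v ∈ e, v ∈ A) w
  have h1 : ∑ e ∈ (edgesIn G S).filter (fun e => ¬ ∃ v ∈ e, v ∈ A), w e ≤ wsum G w B := by
    refine Finset.sum_le_sum_of_subset_of_nonneg ?_ fun e he _ => hw0 e (mem_edgesIn.mp he).1
    intro e he
    rw [Finset.mem_filter] at he
    rcases hsub e he.1 with h | h
    · exact absurd h he.2
    · exact h
  have h2 : ∑ e ∈ (edgesIn G S).filter (fun e => ∃ v ∈ e, v ∈ A), w e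
      ≤ ∑ v ∈ A, wdeg G w S v := by
    rw [sum_wdeg_eq, Finset.sum_filter]
    refine Finset.sum_le_sum fun e he => ?_
    have hw0e : 0 ≤ w e := hw0 e (mem_edgesIn.mp he).1
    by_cases h : ∃ v ∈ e, v ∈ A
    · rw [if_pos h]
      obtain ⟨v, hv, hvA⟩ := h
      have : 1 ≤ ((A.filter (fun v => v ∈ e)).card : ℝ) := by
        have : (A.filter (fun v => v ∈ e)).Nonempty := ⟨v, Finset.mem_filter.mpr ⟨hvA, hv⟩⟩
        exact_mod_cast Finset.card_pos.mpr this
      nlinarith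
    · rw [if_neg h]
      positivity
  unfold wsum at h1 ⊢
  linarith

lemma exists_partition (G : SimpleGraph V) (W : Finset V) (hW : W.Nonempty)
    (hnc : ¬ (G.induce (W : Set V)).Connected) :
    ∃ A B : Finset V, A ∪ B = W ∧ Disjoint A B ∧ A.Nonempty ∧ B.Nonempty ∧
      ∀ x ∈ A, ∀ y ∈ B, ¬ G.Adj x y := by
  classical
  obtain ⟨a, ha⟩ := hW
  have ha' : a ∈ (W : Set V) := Finset.mem_coe.mpr ha
  set P : V → Prop := fun u => ∀ hu : u ∈ (W : Set V),
    (G.induce (W : Set V)).Reachable ⟨a, ha'⟩ ⟨u, hu⟩ with hP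
  set A := W.filter P with hA
  set B := W \ A with hB
  have haA : a ∈ A := Finset.mem_filter.mpr ⟨ha, fun hu => SimpleGraph.Reachable.refl _⟩
  have hBne : B.Nonempty := by
    rw [SimpleGraph.connected_iff] at hnc
    push_neg at hnc
    have hne : Nonempty ((W : Set V) : Type _) := ⟨⟨a, ha'⟩⟩
    have hpre : ¬ (G.induce (W : Set V)).Preconnected := fun h => (hnc h).false ⟨a, ha'⟩
    rw [SimpleGraph.Preconnected] at hpre
    push_neg at hpre
    obtain ⟨x, y, hxy⟩ := hpre
    by_cases hx : P x.val
    · refine ⟨y.val, Finset.mem_sdiff.mpr ⟨Finset.mem_coe.mp y.prop, ?_⟩⟩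
      intro hyA
      have hy := (Finset.mem_filter.mp hyA).2
      exact hxy ((hx x.prop).symm.trans (hy y.prop))
    · refine ⟨x.val, Finset.mem_sdiff.mpr ⟨Finset.mem_coe.mp x.prop, ?_⟩⟩
      intro hxA
      exact hx (Finset.mem_filter.mp hxA).2
  refine ⟨A, B, ?_, Finset.disjoint_sdiff, ⟨a, haA⟩, hBne, ?_⟩
  · exact Finset.union_sdiff_of_subset (Finset.filter_subset _ _)
  · intro x hx y hy hadj
    have hxW : x ∈ W := (Finset.mem_filter.mp hx).1
    have hyW : y ∈ W := (Finset.mem_sdiff.mp hy).1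
    have hyA : y ∉ A := (Finset.mem_sdiff.mp hy).2
    refine hyA (Finset.mem_filter.mpr ⟨hyW, fun hu => ?_⟩)
    have hreach := (Finset.mem_filter.mp hx).2 (Finset.mem_coe.mpr hxW)
    have hadj' : (G.induce (W : Set V)).Adj ⟨x, Finset.mem_coe.mpr hxW⟩ ⟨y, hu⟩ := by
      simp only [SimpleGraph.comap_adj]; exact hadj
    exact hreach.trans hadj'.reachable

lemma other_endpoint {G : SimpleGraph V} {S : Finset V} {e : Sym2 V} (he : e ∈ edgesIn G S)
    {v : V} (hv : v ∈ e) : ∃ u, u ∈ S ∧ u ≠ v ∧ u ∈ e ∧ e = s(v, u) := by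
  refine ⟨Sym2.Mem.other hv, (mem_edgesIn.mp he).2 _ (Sym2.other_mem hv), ?_,
    Sym2.other_mem hv, (Sym2.other_spec hv).symm⟩
  intro h
  apply G.not_isDiag_of_mem_edgeSet (mem_edgesIn.mp he).1
  rw [← Sym2.other_spec hv, h]
  exact Sym2.mk_isDiag_iff.mpr rfl


set_option maxHeartbeats 1000000 in
/-- If `d(V) ≥ d > 0`, `r = ⌈d/wmax⌉`, and `S` is a minimum-cardinality subset among those
satisfying `|S| ≥ r` and `w(S) > d(V)·(|S| - r/2)`, then `G[S]` is
`(⌊r/2⌋+1)`-vertex-connected. -/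
theorem minimal_subset_vertex_connected (G : SimpleGraph V) (w : Sym2 V → ℝ)
    (hE : (edgesIn G Finset.univ).Nonempty)
    (hw : ∀ e ∈ G.edgeSet, 0 < w e)
    (d : ℝ) (hd : 0 < d)
    (hdens : density G w Finset.univ ≥ d)
    (S : Finset V)
    (hScard : ⌈d / (edgesIn G Finset.univ).sup' hE w⌉₊ ≤ S.card)
    (hSw : density G w Finset.univ *
        ((S.card : ℝ) - (⌈d / (edgesIn G Finset.univ).sup' hE w⌉₊ : ℝ) / 2) < wsum G w S)
    (hSmin : ∀ T : Finset V,
      ⌈d / (edgesIn G Finset.univ).sup' hE w⌉₊ ≤ T.card →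
      density G w Finset.univ *
          ((T.card : ℝ) - (⌈d / (edgesIn G Finset.univ).sup' hE w⌉₊ : ℝ) / 2) < wsum G w T →
      S.card ≤ T.card) :
    VertexConnected G S (⌈d / (edgesIn G Finset.univ).sup' hE w⌉₊ / 2 + 1) := by
  classical
  set wm := (edgesIn G Finset.univ).sup' hE w with hwmdef
  set r := ⌈d / wm⌉₊ with hrdef
  set Dv := density G w Finset.univ with hDvdef
  obtain ⟨e₀, he₀⟩ := id hE
  have hwm : 0 < wm := lt_of_lt_of_le (hw e₀ (mem_edgesIn.mp he₀).1) (Finset.le_sup' w he₀)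
  have hwle : ∀ (T : Finset V), ∀ e ∈ edgesIn G T, w e ≤ wm := fun T e he =>
    Finset.le_sup' w (edgesIn_subset (Finset.subset_univ T) he)
  have hw0 : ∀ e ∈ G.edgeSet, 0 ≤ w e := fun e he => le_of_lt (hw e he)
  have hr0 : 0 < r := Nat.ceil_pos.mpr (div_pos hd hwm)
  have hr1' : (1:ℝ) ≤ (r:ℝ) := by exact_mod_cast hr0
  have hrlt : wm * ((r:ℝ) - 1) < d := by
    have h := Nat.ceil_lt_add_one (le_of_lt (div_pos hd hwm))
    have h2 : (r:ℝ) - 1 < d / wm := by rw [hrdef]; linarith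
    calc wm * ((r:ℝ) - 1) < wm * (d / wm) := by exact mul_lt_mul_of_pos_left h2 hwm
      _ = d := by field_simp
  have hdDv : d ≤ Dv := hdens
  have hDv0 : 0 < Dv := lt_of_lt_of_le hd hdDv
  have hdeg_gen : ∀ (T U : Finset V) (v : V),
      (∀ e ∈ edgesIn G T, v ∈ e → ∃ u ∈ U, e = s(v, u)) →
      wdeg G w T v ≤ (U.card : ℝ) * wm := fun T U v h =>
    wdeg_le G w T v U wm (le_of_lt hwm) (hwle T) h
  -- degree bound for all v ∈ S
  have hdegS : ∀ v ∈ S, wdeg G w S v ≤ ((S.card : ℝ) - 1) * wm := by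
    intro v hv
    have h := hdeg_gen S (S.erase v) v ?_
    · rwa [Finset.card_erase_of_mem hv, Nat.cast_sub (Finset.one_le_card.mpr ⟨v, hv⟩),
        Nat.cast_one] at h
    · intro e he hve
      obtain ⟨u, huS, huv, hue, hee⟩ := other_endpoint he hve
      exact ⟨u, Finset.mem_erase.mpr ⟨huv, huS⟩, hee⟩
  have hh : 2 * wsum G w S ≤ (S.card : ℝ) * (((S.card : ℝ) - 1) * wm) := by
    rw [two_wsum]
    calc ∑ v ∈ S, wdeg G w S v ≤ S.card • (((S.card : ℝ) - 1) * wm) :=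
          Finset.sum_le_card_nsmul _ _ _ hdegS
      _ = (S.card : ℝ) * (((S.card : ℝ) - 1) * wm) := by rw [nsmul_eq_mul]
  have hSr : (r : ℝ) ≤ (S.card : ℝ) := by exact_mod_cast hScard
  have hup : wm * ((r:ℝ) - 1) * ((S.card:ℝ) - (r:ℝ)/2) < wsum G w S := by
    have h1 : (0:ℝ) < (S.card:ℝ) - (r:ℝ)/2 := by linarith
    calc wm * ((r:ℝ) - 1) * ((S.card:ℝ) - (r:ℝ)/2) < d * ((S.card:ℝ) - (r:ℝ)/2) := by
          exact mul_lt_mul_of_pos_right hrlt h1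
      _ ≤ Dv * ((S.card:ℝ) - (r:ℝ)/2) := mul_le_mul_of_nonneg_right hdDv (le_of_lt h1)
      _ < wsum G w S := hSw
  have hcardS : r + 1 ≤ S.card := by
    rcases lt_or_eq_of_le hScard with h | h
    · omega
    · exfalso
      have hn : (S.card:ℝ) = (r:ℝ) := by exact_mod_cast h.symm
      rw [hn] at hh hup
      nlinarith [hh, hup, hwm]
  constructor
  · omega
  · intro D hD hDcard
    by_contra hnc
    have hδ2 : 2 * D.card ≤ r := by omega
    have hDS := Finset.card_le_card hD
    have hWne : (S \ D).Nonempty := by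
      rw [← Finset.card_pos, Finset.card_sdiff_of_subset hD]; omega
    obtain ⟨A, B, hUn, hdisj, hAne, hBne, hAB⟩ := exists_partition G (S \ D) hWne hnc
    have hASD : A ⊆ S \ D := hUn ▸ Finset.subset_union_left
    have hBSD : B ⊆ S \ D := hUn ▸ Finset.subset_union_right
    have hAS : A ⊆ S := hASD.trans Finset.sdiff_subset
    have hBS : B ⊆ S := hBSD.trans Finset.sdiff_subset
    have hADd : Disjoint A D := Finset.disjoint_of_subset_left hASD Finset.sdiff_disjoint
    have hBDd : Disjoint B D := Finset.disjoint_of_subset_left hBSD Finset.sdiff_disjoint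
    have hcards : A.card + B.card + D.card = S.card := by
      have h1 : (A ∪ B).card = A.card + B.card := Finset.card_union_of_disjoint hdisj
      have h2 : (S \ D).card = S.card - D.card := Finset.card_sdiff_of_subset hD
      rw [hUn, h2] at h1
      omega
    have hmem : ∀ v ∈ S, v ∈ A ∨ v ∈ B ∨ v ∈ D := by
      intro v hv
      by_cases hvD : v ∈ D
      · exact Or.inr (Or.inr hvD)
      · have hv' : v ∈ S \ D := Finset.mem_sdiff.mpr ⟨hv, hvD⟩
        rw [← hUn] at hv'
        rcases Finset.mem_union.mp hv' with h | h
        · exact Or.inl h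
        · exact Or.inr (Or.inl h)
    have hAnot : ∀ v ∈ A, v ∉ B ∧ v ∉ D := fun v hv =>
      ⟨fun h => Finset.disjoint_left.mp hdisj hv h, fun h => Finset.disjoint_left.mp hADd hv h⟩
    have hBnot : ∀ v ∈ B, v ∉ A ∧ v ∉ D := fun v hv =>
      ⟨fun h => Finset.disjoint_left.mp hdisj h hv, fun h => Finset.disjoint_left.mp hBDd hv h⟩
    have hsplit : ∀ e ∈ edgesIn G S, e ∈ edgesIn G (A ∪ D) ∨ e ∈ edgesIn G (B ∪ D) := by
      intro e
      refine Sym2.ind (fun x y he => ?_) e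
      have hmm := mem_edgesIn.mp he
      have hadj : G.Adj x y := (SimpleGraph.mem_edgeSet G).mp hmm.1
      have hx : x ∈ S := hmm.2 x (by simp)
      have hy : y ∈ S := hmm.2 y (by simp)
      have hchoice : (x ∈ A ∪ D ∧ y ∈ A ∪ D) ∨ (x ∈ B ∪ D ∧ y ∈ B ∪ D) := by
        rcases hmem x hx with hxm | hxm | hxm <;> rcases hmem y hy with hym | hym | hym
        · exact Or.inl ⟨Finset.mem_union_left _ hxm, Finset.mem_union_left _ hym⟩
        · exact absurd hadj (hAB x hxm y hym)
        · exact Or.inl ⟨Finset.mem_union_left _ hxm, Finset.mem_union_right _ hym⟩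
        · exact absurd hadj.symm (hAB y hym x hxm)
        · exact Or.inr ⟨Finset.mem_union_left _ hxm, Finset.mem_union_left _ hym⟩
        · exact Or.inr ⟨Finset.mem_union_left _ hxm, Finset.mem_union_right _ hym⟩
        · exact Or.inl ⟨Finset.mem_union_right _ hxm, Finset.mem_union_left _ hym⟩
        · exact Or.inr ⟨Finset.mem_union_right _ hxm, Finset.mem_union_left _ hym⟩
        · exact Or.inl ⟨Finset.mem_union_right _ hxm, Finset.mem_union_right _ hym⟩
      rcases hchoice with ⟨h1, h2⟩ | ⟨h1, h2⟩
      · refine Or.inl (mem_edgesIn.mpr ⟨hmm.1, fun v hv => ?_⟩)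
        rcases Sym2.mem_iff.mp hv with rfl | rfl
        exacts [h1, h2]
      · refine Or.inr (mem_edgesIn.mpr ⟨hmm.1, fun v hv => ?_⟩)
        rcases Sym2.mem_iff.mp hv with rfl | rfl
        exacts [h1, h2]
    -- degree bounds for vertices of A and B
    have hdegSide : ∀ (X : Finset V), (∀ v ∈ X, v ∉ (if X = A then B else A) ∧ v ∉ D) →
        True := fun _ _ => trivial
    have hdegA : ∀ v ∈ A, wdeg G w S v ≤ (((A ∪ D).card : ℝ) - 1) * wm := by
      intro v hv
      have hvAD : v ∈ A ∪ D := Finset.mem_union_left _ hv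
      have h := hdeg_gen S ((A ∪ D).erase v) v ?_
      · rwa [Finset.card_erase_of_mem hvAD, Nat.cast_sub (Finset.one_le_card.mpr ⟨v, hvAD⟩),
          Nat.cast_one] at h
      · intro e he hve
        obtain ⟨u, huS, huv, hue, hee⟩ := other_endpoint he hve
        rcases hsplit e he with hside | hside
        · exact ⟨u, Finset.mem_erase.mpr ⟨huv, (mem_edgesIn.mp hside).2 u hue⟩, hee⟩
        · exfalso
          have hvBD := (mem_edgesIn.mp hside).2 v hve
          rcases Finset.mem_union.mp hvBD with h' | h'
          · exact (hAnot v hv).1 h'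
          · exact (hAnot v hv).2 h'
    have hdegB : ∀ v ∈ B, wdeg G w S v ≤ (((B ∪ D).card : ℝ) - 1) * wm := by
      intro v hv
      have hvBD : v ∈ B ∪ D := Finset.mem_union_left _ hv
      have h := hdeg_gen S ((B ∪ D).erase v) v ?_
      · rwa [Finset.card_erase_of_mem hvBD, Nat.cast_sub (Finset.one_le_card.mpr ⟨v, hvBD⟩),
          Nat.cast_one] at h
      · intro e he hve
        obtain ⟨u, huS, huv, hue, hee⟩ := other_endpoint he hve
        rcases hsplit e he with hside | hside
        · exfalso
          have hvAD := (mem_edgesIn.mp hside).2 v hve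
          rcases Finset.mem_union.mp hvAD with h' | h'
          · exact (hBnot v hv).1 h'
          · exact (hBnot v hv).2 h'
        · exact ⟨u, Finset.mem_erase.mpr ⟨huv, (mem_edgesIn.mp hside).2 u hue⟩, hee⟩
    -- real casts
    have hcA : ((A ∪ D).card : ℝ) = (A.card : ℝ) + (D.card : ℝ) := by
      rw [Finset.card_union_of_disjoint hADd]; push_cast; ring
    have hcB : ((B ∪ D).card : ℝ) = (B.card : ℝ) + (D.card : ℝ) := by
      rw [Finset.card_union_of_disjoint hBDd]; push_cast; ring
    have hcS : (S.card : ℝ) = (A.card : ℝ) + (B.card : ℝ) + (D.card : ℝ) := by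
      rw [← hcards]; push_cast; ring
    have hA1 : (1:ℝ) ≤ (A.card : ℝ) := by exact_mod_cast Finset.one_le_card.mpr hAne
    have hB1 : (1:ℝ) ≤ (B.card : ℝ) := by exact_mod_cast Finset.one_le_card.mpr hBne
    have hδr : 2 * (D.card : ℝ) ≤ (r:ℝ) := by exact_mod_cast hδ2
    have hnr1 : (r:ℝ) + 1 ≤ (S.card:ℝ) := by exact_mod_cast hcardS
    have hmin' : ∀ T : Finset V, T.card < S.card → r ≤ T.card →
        wsum G w T ≤ Dv * ((T.card : ℝ) - (r:ℝ)/2) := by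
      intro T h1 h2
      by_contra h3
      have := hSmin T h2 (lt_of_not_ge h3)
      omega
    have hADlt : (A ∪ D).card < S.card := by
      rw [Finset.card_union_of_disjoint hADd]
      have := Finset.one_le_card.mpr hBne
      omega
    have hBDlt : (B ∪ D).card < S.card := by
      rw [Finset.card_union_of_disjoint hBDd]
      have := Finset.one_le_card.mpr hAne
      omega
    by_cases hA : r ≤ (A ∪ D).card
    · by_cases hB : r ≤ (B ∪ D).card
      · -- both big
        have h1 := hmin' _ hADlt hA
        have h2 := hmin' _ hBDlt hB
        have h3 := wsum_le_split G w S (A ∪ D) (B ∪ D) hw0 hsplit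
        have hfin : wsum G w S ≤ Dv * ((S.card:ℝ) - (r:ℝ)/2) := by
          calc wsum G w S ≤ wsum G w (A ∪ D) + wsum G w (B ∪ D) := h3
            _ ≤ Dv * (((A ∪ D).card : ℝ) - (r:ℝ)/2) + Dv * (((B ∪ D).card : ℝ) - (r:ℝ)/2) :=
                add_le_add h1 h2
            _ = Dv * ((S.card:ℝ) + (D.card:ℝ) - (r:ℝ)) := by rw [hcA, hcB, hcS]; ring
            _ ≤ Dv * ((S.card:ℝ) - (r:ℝ)/2) := by
                apply mul_le_mul_of_nonneg_left _ (le_of_lt hDv0)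
                linarith
        linarith
      · -- A∪D big, B∪D small : edges touching B
        push_neg at hB
        have hBr : ((B ∪ D).card : ℝ) + 1 ≤ (r:ℝ) := by exact_mod_cast hB
        have h1 := hmin' _ hADlt hA
        have hside : wsum G w S ≤ (∑ v ∈ B, wdeg G w S v) + wsum G w (A ∪ D) := by
          apply wsum_le_side G w S B (A ∪ D) hw0
          intro e he
          rcases hsplit e he with hs | hs
          · exact Or.inr hs
          · by_cases ht : ∃ v ∈ e, v ∈ B
            · exact Or.inl ht
            · push_neg at ht
              refine Or.inr (mem_edgesIn.mpr ⟨(mem_edgesIn.mp hs).1, fun v hv => ?_⟩)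
              have := (mem_edgesIn.mp hs).2 v hv
              rcases Finset.mem_union.mp this with h' | h'
              · exact absurd h' (ht v hv)
              · exact Finset.mem_union_right _ h'
        have hsumB : ∑ v ∈ B, wdeg G w S v ≤ (B.card:ℝ) * ((((B ∪ D).card : ℝ) - 1) * wm) := by
          calc ∑ v ∈ B, wdeg G w S v ≤ B.card • ((((B ∪ D).card : ℝ) - 1) * wm) :=
                Finset.sum_le_card_nsmul _ _ _ hdegB
            _ = _ := by rw [nsmul_eq_mul]
        have hwm2 : wm * ((r:ℝ) - 2) < Dv := by
          have he : wm * ((r:ℝ) - 2) = wm * ((r:ℝ) - 1) - wm := by ring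
          linarith [hrlt, hwm, hdDv]
        have e1 : Dv * ((S.card:ℝ) - (r:ℝ)/2)
            = Dv * (((A ∪ D).card:ℝ) - (r:ℝ)/2) + Dv * (B.card:ℝ) := by
          rw [hcA, hcS]; ring
        have h2 : Dv * (B.card:ℝ) < (B.card:ℝ) * ((((B ∪ D).card:ℝ) - 1) * wm) := by
          linarith [hSw, hside, hsumB, h1, e1]
        have h3 : (B.card:ℝ) * ((((B ∪ D).card:ℝ) - 1) * wm)
            ≤ (B.card:ℝ) * (((r:ℝ) - 2) * wm) := by
          apply mul_le_mul_of_nonneg_left _ (by linarith : (0:ℝ) ≤ (B.card:ℝ))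
          apply mul_le_mul_of_nonneg_right _ (le_of_lt hwm)
          linarith [hBr]
        have h4 : (B.card:ℝ) * (((r:ℝ) - 2) * wm) < (B.card:ℝ) * Dv := by
          apply mul_lt_mul_of_pos_left _ (by linarith : (0:ℝ) < (B.card:ℝ))
          linarith [hwm2]
        linarith [h2, h3, h4]
    · push_neg at hA
      have hAr : ((A ∪ D).card : ℝ) + 1 ≤ (r:ℝ) := by exact_mod_cast hA
      by_cases hB : r ≤ (B ∪ D).card
      · -- B∪D big, A∪D small
        have h1 := hmin' _ hBDlt hB
        have hside : wsum G w S ≤ (∑ v ∈ A, wdeg G w S v) + wsum G w (B ∪ D) := by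
          apply wsum_le_side G w S A (B ∪ D) hw0
          intro e he
          rcases hsplit e he with hs | hs
          · by_cases ht : ∃ v ∈ e, v ∈ A
            · exact Or.inl ht
            · push_neg at ht
              refine Or.inr (mem_edgesIn.mpr ⟨(mem_edgesIn.mp hs).1, fun v hv => ?_⟩)
              have := (mem_edgesIn.mp hs).2 v hv
              rcases Finset.mem_union.mp this with h' | h'
              · exact absurd h' (ht v hv)
              · exact Finset.mem_union_right _ h'
          · exact Or.inr hs
        have hsumA : ∑ v ∈ A, wdeg G w S v ≤ (A.card:ℝ) * ((((A ∪ D).card : ℝ) - 1) * wm) := by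
          calc ∑ v ∈ A, wdeg G w S v ≤ A.card • ((((A ∪ D).card : ℝ) - 1) * wm) :=
                Finset.sum_le_card_nsmul _ _ _ hdegA
            _ = _ := by rw [nsmul_eq_mul]
        have hwm2 : wm * ((r:ℝ) - 2) < Dv := by
          have he : wm * ((r:ℝ) - 2) = wm * ((r:ℝ) - 1) - wm := by ring
          linarith [hrlt, hwm, hdDv]
        have e1 : Dv * ((S.card:ℝ) - (r:ℝ)/2)
            = Dv * (((B ∪ D).card:ℝ) - (r:ℝ)/2) + Dv * (A.card:ℝ) := by
          rw [hcB, hcS]; ring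
        have h2 : Dv * (A.card:ℝ) < (A.card:ℝ) * ((((A ∪ D).card:ℝ) - 1) * wm) := by
          linarith [hSw, hside, hsumA, h1, e1]
        have h3 : (A.card:ℝ) * ((((A ∪ D).card:ℝ) - 1) * wm)
            ≤ (A.card:ℝ) * (((r:ℝ) - 2) * wm) := by
          apply mul_le_mul_of_nonneg_left _ (by linarith : (0:ℝ) ≤ (A.card:ℝ))
          apply mul_le_mul_of_nonneg_right _ (le_of_lt hwm)
          linarith [hAr]
        have h4 : (A.card:ℝ) * (((r:ℝ) - 2) * wm) < (A.card:ℝ) * Dv := by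
          apply mul_lt_mul_of_pos_left _ (by linarith : (0:ℝ) < (A.card:ℝ))
          linarith [hwm2]
        linarith [h2, h3, h4]
      · -- both small
        push_neg at hB
        have hBr : ((B ∪ D).card : ℝ) + 1 ≤ (r:ℝ) := by exact_mod_cast hB
        have hSeq : A ∪ B ∪ D = S := by
          rw [hUn]
          exact Finset.sdiff_union_of_subset hD
        have hdisj2 : Disjoint (A ∪ B) D := by
          rw [Finset.disjoint_union_left]; exact ⟨hADd, hBDd⟩
        have hsplitsum : ∑ v ∈ S, wdeg G w S v =
            (∑ v ∈ A, wdeg G w S v) + (∑ v ∈ B, wdeg G w S v) + (∑ v ∈ D, wdeg G w S v) := by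
          rw [← hSeq, Finset.sum_union hdisj2, Finset.sum_union hdisj]
        have hsumA : ∑ v ∈ A, wdeg G w S v ≤ (A.card:ℝ) * ((((A ∪ D).card : ℝ) - 1) * wm) := by
          calc ∑ v ∈ A, wdeg G w S v ≤ A.card • ((((A ∪ D).card : ℝ) - 1) * wm) :=
                Finset.sum_le_card_nsmul _ _ _ hdegA
            _ = _ := by rw [nsmul_eq_mul]
        have hsumB : ∑ v ∈ B, wdeg G w S v ≤ (B.card:ℝ) * ((((B ∪ D).card : ℝ) - 1) * wm) := by
          calc ∑ v ∈ B, wdeg G w S v ≤ B.card • ((((B ∪ D).card : ℝ) - 1) * wm) :=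
                Finset.sum_le_card_nsmul _ _ _ hdegB
            _ = _ := by rw [nsmul_eq_mul]
        have hsumD : ∑ v ∈ D, wdeg G w S v ≤ (D.card:ℝ) * (((S.card : ℝ) - 1) * wm) := by
          calc ∑ v ∈ D, wdeg G w S v ≤ D.card • (((S.card : ℝ) - 1) * wm) :=
                Finset.sum_le_card_nsmul _ _ _ (fun v hv => hdegS v (hD hv))
            _ = _ := by rw [nsmul_eq_mul]
        have h2w := two_wsum G w S
        -- abbreviations
        have hα : (S.card:ℝ) - (r:ℝ) + 1 ≤ (A.card:ℝ) := by
          rw [hcS]; rw [hcB] at hBr; linarith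
        have hβ : (S.card:ℝ) - (r:ℝ) + 1 ≤ (B.card:ℝ) := by
          rw [hcS]; rw [hcA] at hAr; linarith
        have hm1 : (0:ℝ) < (S.card:ℝ) - (r:ℝ) + 1 := by linarith
        have hprod : ((S.card:ℝ) - (r:ℝ)) * ((S.card:ℝ) - (r:ℝ) + 1)
            ≤ 2 * ((A.card:ℝ) * (B.card:ℝ)) := by
          have hab : ((S.card:ℝ) - (r:ℝ) + 1) * ((S.card:ℝ) - (r:ℝ) + 1)
              ≤ (A.card:ℝ) * (B.card:ℝ) :=
            mul_le_mul hα hβ (le_of_lt hm1) (le_trans (le_of_lt hm1) hα)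
          have habnn : (0:ℝ) ≤ (A.card:ℝ) * (B.card:ℝ) :=
            mul_nonneg (by linarith) (by linarith)
          have hxx : ((S.card:ℝ) - (r:ℝ)) * ((S.card:ℝ) - (r:ℝ) + 1)
              ≤ ((S.card:ℝ) - (r:ℝ) + 1) * ((S.card:ℝ) - (r:ℝ) + 1) :=
            mul_le_mul_of_nonneg_right (by linarith) (le_of_lt hm1)
          linarith [hab, habnn, hxx]
        have hbound : 2 * wsum G w S ≤
            ((S.card:ℝ) * ((S.card:ℝ) - 1) - 2 * ((A.card:ℝ) * (B.card:ℝ))) * wm := by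
          have hid : (A.card:ℝ) * ((((A ∪ D).card : ℝ) - 1))
              + (B.card:ℝ) * ((((B ∪ D).card : ℝ) - 1))
              + (D.card:ℝ) * (((S.card : ℝ) - 1))
              = (S.card:ℝ) * ((S.card:ℝ) - 1) - 2 * ((A.card:ℝ) * (B.card:ℝ)) := by
            rw [hcA, hcB, hcS]; ring
          calc 2 * wsum G w S = ∑ v ∈ S, wdeg G w S v := h2w
            _ ≤ (A.card:ℝ) * ((((A ∪ D).card : ℝ) - 1) * wm)
                + (B.card:ℝ) * ((((B ∪ D).card : ℝ) - 1) * wm)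
                + (D.card:ℝ) * (((S.card : ℝ) - 1) * wm) := by
                rw [hsplitsum]; exact add_le_add (add_le_add hsumA hsumB) hsumD
            _ = ((A.card:ℝ) * (((A ∪ D).card : ℝ) - 1)
                + (B.card:ℝ) * (((B ∪ D).card : ℝ) - 1)
                + (D.card:ℝ) * ((S.card : ℝ) - 1)) * wm := by ring
            _ = _ := by rw [hid]
        have hfinal : ((S.card:ℝ) * ((S.card:ℝ) - 1) - 2 * ((A.card:ℝ) * (B.card:ℝ))) * wm
            ≤ ((r:ℝ) - 1) * (2 * (S.card:ℝ) - (r:ℝ)) * wm := by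
          apply mul_le_mul_of_nonneg_right _ (le_of_lt hwm)
          nlinarith [hprod]
        have e2 : ((r:ℝ) - 1) * (2 * (S.card:ℝ) - (r:ℝ)) * wm
            = 2 * (wm * ((r:ℝ) - 1) * ((S.card:ℝ) - (r:ℝ)/2)) := by ring
        linarith [hup, hbound, hfinal, e2]
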